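/- For m = 0 and c = k > 0, the underlying graph of the linear Jaco graph J_n(k) (f(x) = k constant) is a disjoint union of ⌊n/(k+1)⌋ copies of the complete graph K_{k+1} together with one complete graph K_{n − (k+1)·⌊n/(k+1)⌋} on the remaining vertices. -/
import Mathlib


/-- In-degree of vertex `j` in the infinite linear Jaco graph for `f x = m * x + c`:
`d⁻(v_j)` is the number of tails `1 ≤ i < j` with `f i + i - d⁻(v_i) ≥ j`
(stated subtraction-free as `j + d⁻(v_i) ≤ m * i + c + i`). -/
noncomputable def jacoIndeg (m c : ℕ) (j : ℕ) : ℕ :=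
  Nat.strongRecOn j (fun j ih =>
    ((Finset.Ico 1 j).attach.filter (fun i =>
      j + ih i.1 (Finset.mem_Ico.mp i.2).2 ≤ m * i.1 + c + i.1)).card)

/-- `(v_i, v_j)` is an arc of the infinite Jaco graph `J_∞(mx + c)` iff `1 ≤ i < j` and
`f(i) + i - d⁻(v_i) ≥ j`. -/
def JacoArc (m c i j : ℕ) : Prop :=
  1 ≤ i ∧ i < j ∧ j + jacoIndeg m c i ≤ m * i + c + i

noncomputable instance (m c i j : ℕ) : Decidable (JacoArc m c i j) := by
  unfold JacoArc; infer_instance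

/-- Out-degree of `v_i` in the infinite Jaco graph `J_∞(mx + c)`. -/
noncomputable def jacoOutdegInf (m c i : ℕ) : ℕ := {j | JacoArc m c i j}.ncard

/-- Out-degree of `v_i` in the finite Jaco graph `J_n(mx + c)`. -/
noncomputable def jacoOutdeg (m c n i : ℕ) : ℕ :=
  ((Finset.Icc 1 n).filter (fun j => JacoArc m c i j)).card

/-- Total degree of `v_i` in the underlying graph of `J_n(mx + c)`
(for `i ≤ n` the in-degree in `J_n` agrees with that in `J_∞`). -/
noncomputable def jacoDeg (m c n i : ℕ) : ℕ := jacoIndeg m c i + jacoOutdeg m c n i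

/-- Number of arcs of the finite Jaco graph `J_n(mx + c)`. -/
noncomputable def jacoArcs (m c n : ℕ) : ℕ :=
  (((Finset.Icc 1 n) ×ˢ (Finset.Icc 1 n)).filter (fun p => JacoArc m c p.1 p.2)).card

lemma jacoIndeg_rec (m c j : ℕ) : jacoIndeg m c j =
    ((Finset.Ico 1 j).filter (fun i => j + jacoIndeg m c i ≤ m * i + c + i)).card := by
  have h : jacoIndeg m c j = ((Finset.Ico 1 j).attach.filter (fun i =>
      j + jacoIndeg m c i.1 ≤ m * i.1 + c + i.1)).card := by
    conv_lhs => rw [jacoIndeg, Nat.strongRecOn, WellFounded.fix_eq]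
    rfl
  rw [h, Finset.filter_attach (fun i => j + jacoIndeg m c i ≤ m * i + c + i) (Finset.Ico 1 j)]
  simp

lemma jacoIndeg_const (k : ℕ) : ∀ j, jacoIndeg 0 k j = (j - 1) % (k + 1) := by
  intro j
  induction j using Nat.strongRecOn with
  | _ j ih =>
  rw [jacoIndeg_rec]
  have hpos : 0 < k + 1 := Nat.succ_pos k
  have hset : (Finset.Ico 1 j).filter (fun i => j + jacoIndeg 0 k i ≤ 0 * i + k + i)
      = Finset.Ico ((k + 1) * ((j - 1) / (k + 1)) + 1) j := by
    ext i
    simp only [Finset.mem_filter, Finset.mem_Ico]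
    constructor
    · rintro ⟨⟨h1, h2⟩, h3⟩
      rw [ih i h2] at h3
      refine ⟨?_, h2⟩
      have hdi := Nat.div_add_mod (i - 1) (k + 1)
      have hle : (j - 1) / (k + 1) ≤ (i - 1) / (k + 1) := by
        have hlt : (j - 1) / (k + 1) < (i - 1) / (k + 1) + 1 := by
          rw [Nat.div_lt_iff_lt_mul hpos]
          have hmi := Nat.mod_lt (i - 1) hpos
          have hx : ((i - 1) / (k + 1) + 1) * (k + 1)
              = (k + 1) * ((i - 1) / (k + 1)) + (k + 1) := by ring
          omega
        omega
      have hge : (i - 1) / (k + 1) ≤ (j - 1) / (k + 1) :=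
        Nat.div_le_div_right (by omega)
      have heq : (i - 1) / (k + 1) = (j - 1) / (k + 1) := le_antisymm hge hle
      rw [← heq]
      omega
    · rintro ⟨h1, h2⟩
      have h1' : 1 ≤ i := by omega
      refine ⟨⟨h1', h2⟩, ?_⟩
      rw [ih i h2]
      have hdi := Nat.div_add_mod (i - 1) (k + 1)
      have hdj := Nat.div_add_mod (j - 1) (k + 1)
      have hmj := Nat.mod_lt (j - 1) hpos
      have hge : (j - 1) / (k + 1) ≤ (i - 1) / (k + 1) := by
        rw [Nat.le_div_iff_mul_le hpos]
        have hx : (j - 1) / (k + 1) * (k + 1) = (k + 1) * ((j - 1) / (k + 1)) :=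
          Nat.mul_comm _ _
        omega
      have hle : (i - 1) / (k + 1) ≤ (j - 1) / (k + 1) :=
        Nat.div_le_div_right (by omega)
      have heq : (i - 1) / (k + 1) = (j - 1) / (k + 1) := le_antisymm hle hge
      rw [heq] at hdi
      omega
  rw [hset, Nat.card_Ico]
  have hdj := Nat.div_add_mod (j - 1) (k + 1)
  have hmj := Nat.mod_lt (j - 1) hpos
  omega

/-- For `m = 0` and `c = k > 0`, the underlying graph of `J_n(k)` is the disjoint union
of `⌊n/(k+1)⌋` copies of `K_{k+1}` and one `K_{n - (k+1)⌊n/(k+1)⌋}`: vertices `i < j` are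
adjacent iff they lie in the same block of `k + 1` consecutive vertices. -/
theorem jaco_constant_blocks (k n : ℕ) (hk : 1 ≤ k) :
    ∀ i j : ℕ, 1 ≤ i → i < j → j ≤ n →
      (JacoArc 0 k i j ↔ (i - 1) / (k + 1) = (j - 1) / (k + 1)) := by
  intro i j hi hij hjn
  have hpos : 0 < k + 1 := Nat.succ_pos k
  have hdi := Nat.div_add_mod (i - 1) (k + 1)
  have hdj := Nat.div_add_mod (j - 1) (k + 1)
  have hmj := Nat.mod_lt (j - 1) hpos
  have hmi := Nat.mod_lt (i - 1) hpos
  constructor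
  · rintro ⟨-, -, h3⟩
    rw [jacoIndeg_const] at h3
    have hle : (j - 1) / (k + 1) ≤ (i - 1) / (k + 1) := by
      have hlt : (j - 1) / (k + 1) < (i - 1) / (k + 1) + 1 := by
        rw [Nat.div_lt_iff_lt_mul hpos]
        have hx : ((i - 1) / (k + 1) + 1) * (k + 1)
            = (k + 1) * ((i - 1) / (k + 1)) + (k + 1) := by ring
        omega
      omega
    have hge : (i - 1) / (k + 1) ≤ (j - 1) / (k + 1) :=
      Nat.div_le_div_right (by omega)
    exact le_antisymm hge hle
  · intro heq
    refine ⟨hi, hij, ?_⟩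
    rw [jacoIndeg_const]
    rw [heq] at hdi
    omega
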